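/- arXiv:2101.00541 — 2 statements merged into one kernel-verified Lean document; each statement's English description precedes it below -/
import Mathlib

section
/- Let α ∈ (0,1), T > 0, let 𝒫 be a partition of [0,T] with N subintervals, and let K ∈ ℝ^{N×N} have entries K_{ni} = (1/Γ(α+1))((t_n − t_{i−1})^α − (t_n − t_i)^α) for 1 ≤ i ≤ n ≤ N and K_{ni} = 0 for i > n. Let 𝓗 be a real inner product space, let Φ : 𝓗 → ℝ be bounded below with m ≤ Φ(w) for all w ∈ 𝓗, let U_0 ∈ 𝓗 and F_1, …, F_N ∈ 𝓗, and suppose U_1, …, U_N ∈ 𝓗 and V_1, …, V_N ∈ 𝓗 satisfy: (a) U_n = U_0 + Σ_{i=1}^n K_{ni} V_i for every n ∈ {1,…,N}; and (b) Φ(U_n) + ⟨F_n − V_n, w − U_n⟩ ≤ Φ(w) for every n ∈ {1,…,N} and every w ∈ 𝓗. Then for every n ∈ {1,…,N}, Σ_{i=1}^n K_{ni} ‖V_i‖² ≤ Σ_{i=1}^n K_{ni} ‖F_i‖² + 2 ( Φ(U_0) − m ). -/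
/-- Discrete deconvolution kernel: `Bmat k n l` solves
`∑_{i=l}^n k n i * Bmat k i l = 1` for `l ≤ n`. -/
noncomputable def Bmat (k : ℕ → ℕ → ℝ) : ℕ → ℕ → ℝ
  | n, l => (1 - ∑ i ∈ (Finset.Ico l n).attach, k n i.1 * Bmat k i.1 l) / k n n
  termination_by n l => n
  decreasing_by exact (Finset.mem_Ico.mp i.2).2

lemma Bmat_def (k : ℕ → ℕ → ℝ) (n l : ℕ) :
    Bmat k n l = (1 - ∑ i ∈ Finset.Ico l n, k n i * Bmat k i l) / k n n := by
  rw [Bmat, ← Finset.sum_attach (Finset.Ico l n) (fun i => k n i * Bmat k i l)]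

lemma Brel (k : ℕ → ℕ → ℝ) {n l : ℕ} (hln : l ≤ n) (hk : k n n ≠ 0) :
    ∑ i ∈ Finset.Icc l n, k n i * Bmat k i l = 1 := by
  have hins : Finset.Icc l n = insert n (Finset.Ico l n) := by
    ext x; simp [Finset.mem_Icc, Finset.mem_Ico, Finset.mem_insert]; omega
  rw [hins, Finset.sum_insert (by simp [Finset.mem_Ico])]
  rw [Bmat_def k n l]
  field_simp
  ring

section Bprops
variable (k : ℕ → ℕ → ℝ) (N : ℕ)
  (hpos : ∀ i j, 1 ≤ j → j ≤ i → i ≤ N → 0 < k i j)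
  (hII : ∀ n j, 1 ≤ j → j ≤ n → n + 1 ≤ N → k (n + 1) j ≤ k n j)

include hpos hII in
lemma Bnonneg : ∀ n l, 1 ≤ l → l ≤ n → n ≤ N → 0 ≤ Bmat k n l := by
  intro n
  induction n using Nat.strong_induction_on with
  | _ n IH =>
    intro l hl hln hnN
    rw [Bmat_def]
    apply div_nonneg _ (hpos n n (hl.trans hln) le_rfl hnN).le
    rw [sub_nonneg]
    rcases Nat.eq_or_lt_of_le hln with h | h
    · subst h; simp
    · -- l < n, so n = n' + 1
      obtain ⟨n', rfl⟩ : ∃ n', n = n' + 1 := ⟨n - 1, by omega⟩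
      calc ∑ i ∈ Finset.Ico l (n' + 1), k (n' + 1) i * Bmat k i l
          ≤ ∑ i ∈ Finset.Ico l (n' + 1), k n' i * Bmat k i l := by
            apply Finset.sum_le_sum
            intro i hi
            rw [Finset.mem_Ico] at hi
            have hB : 0 ≤ Bmat k i l := IH i (by omega) l hl hi.1 (by omega)
            exact mul_le_mul_of_nonneg_right
              (hII n' i (hl.trans hi.1) (by omega) hnN) hB
        _ = 1 := by
            rw [Finset.Ico_add_one_right_eq_Icc]
            exact Brel k (by omega) (hpos n' n' (by omega) le_rfl (by omega)).ne'

include hpos in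
lemma Bdiffrel : ∀ n l, 1 ≤ l → l + 1 ≤ n → n ≤ N →
    ∑ i ∈ Finset.Icc (l + 1) n, k n i * (Bmat k i (l + 1) - Bmat k i l)
      = k n l * Bmat k l l := by
  intro n l hl hln hnN
  have hknn : k n n ≠ 0 := (hpos n n (by omega) le_rfl hnN).ne'
  have h1 : ∑ i ∈ Finset.Icc l n, k n i * Bmat k i l = 1 := Brel k (by omega) hknn
  have h2 : ∑ i ∈ Finset.Icc (l + 1) n, k n i * Bmat k i (l + 1) = 1 :=
    Brel k (by omega) hknn
  have hins : Finset.Icc l n = insert l (Finset.Icc (l + 1) n) := by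
    ext x; simp [Finset.mem_Icc, Finset.mem_insert]; omega
  rw [hins, Finset.sum_insert (by simp [Finset.mem_Icc])] at h1
  simp only [mul_sub, Finset.sum_sub_distrib]
  linarith

include hpos hII in
lemma Bmono (hIII : ∀ n j l, 1 ≤ l → l < j → j ≤ n → n + 1 ≤ N →
      k (n + 1) j * k n l ≤ k (n + 1) l * k n j) :
    ∀ n l, 1 ≤ l → l + 1 ≤ n → n ≤ N → Bmat k n l ≤ Bmat k n (l + 1) := by
  intro n
  induction n using Nat.strong_induction_on with
  | _ n IH =>
    intro l hl hln hnN
    rw [← sub_nonneg]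
    have hd := Bdiffrel k N hpos n l hl hln hnN
    have hBll : 0 ≤ Bmat k l l := Bnonneg k N hpos hII l l hl le_rfl (by omega)
    have hins : Finset.Icc (l + 1) n = insert n (Finset.Icc (l + 1) (n - 1)) := by
      ext x; simp [Finset.mem_Icc, Finset.mem_insert]; omega
    rw [hins, Finset.sum_insert (by simp [Finset.mem_Icc]; omega)] at hd
    have hknn : 0 < k n n := hpos n n (by omega) le_rfl hnN
    have hsum : ∑ i ∈ Finset.Icc (l + 1) (n - 1),
        k n i * (Bmat k i (l + 1) - Bmat k i l) ≤ k n l * Bmat k l l := by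
      rcases Nat.eq_or_lt_of_le hln with h | h
      · rw [← h]; simp
        exact mul_nonneg (hpos (l + 1) l hl (by omega) (by omega)).le hBll
      · -- n ≥ l + 2; set n' = n - 1 ≥ l + 1
        obtain ⟨n', rfl⟩ : ∃ n', n = n' + 1 := ⟨n - 1, by omega⟩
        simp only [Nat.add_sub_cancel]
        have hd' := Bdiffrel k N hpos n' l hl (by omega) (by omega)
        have hkn'l : 0 < k n' l := hpos n' l hl (by omega) (by omega)
        rw [← mul_le_mul_iff_of_pos_right hkn'l]
        calc (∑ i ∈ Finset.Icc (l + 1) n',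
                k (n' + 1) i * (Bmat k i (l + 1) - Bmat k i l)) * k n' l
            = ∑ i ∈ Finset.Icc (l + 1) n',
                (k (n' + 1) i * k n' l) * (Bmat k i (l + 1) - Bmat k i l) := by
              rw [Finset.sum_mul]; apply Finset.sum_congr rfl; intro i _; ring
          _ ≤ ∑ i ∈ Finset.Icc (l + 1) n',
                (k (n' + 1) l * k n' i) * (Bmat k i (l + 1) - Bmat k i l) := by
              apply Finset.sum_le_sum
              intro i hi
              rw [Finset.mem_Icc] at hi
              have hD : 0 ≤ Bmat k i (l + 1) - Bmat k i l := by
                rw [sub_nonneg]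
                exact IH i (by omega) l hl (by omega) (by omega)
              exact mul_le_mul_of_nonneg_right
                (hIII n' i l hl (by omega) hi.2 (by omega)) hD
          _ = k (n' + 1) l * (k n' l * Bmat k l l) := by
              rw [← hd', Finset.mul_sum]
              apply Finset.sum_congr rfl; intro i _; ring
          _ = k (n' + 1) l * Bmat k l l * k n' l := by ring
    have : 0 ≤ k n n * (Bmat k n (l + 1) - Bmat k n l) := by linarith
    exact nonneg_of_mul_nonneg_right this hknn

end Bprops


section Kernel
variable {α : ℝ} (hα : α ∈ Set.Ioo (0 : ℝ) 1)

include hα in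
lemma bracket_pos {a u v : ℝ} (huv : u < v) (hva : v ≤ a) :
    0 < (a - u) ^ α - (a - v) ^ α := by
  rw [sub_pos]
  exact Real.rpow_lt_rpow (by linarith) (by linarith) hα.1

include hα in
lemma psi_anti {δ : ℝ} (hδ : 0 < δ) {x y : ℝ} (hx : 0 ≤ x) (hxy : x ≤ y) :
    (y + δ) ^ α - y ^ α ≤ (x + δ) ^ α - x ^ α := by
  rcases eq_or_lt_of_le hxy with rfl | hlt
  · exact le_refl _
  have hanti : StrictAntiOn (fun z : ℝ => (z + δ) ^ α - z ^ α) (Set.Ici 0) := by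
    apply strictAntiOn_of_deriv_neg (convex_Ici 0)
    · apply ContinuousOn.sub
      · exact fun z _ => ((Real.continuousAt_rpow_const _ _
          (Or.inr hα.1.le)).comp (by fun_prop)).continuousWithinAt
      · exact fun z _ => (Real.continuousAt_rpow_const _ _
          (Or.inr hα.1.le)).continuousWithinAt
    · intro z hz
      rw [interior_Ici] at hz
      have hz0 : (0:ℝ) < z := hz
      have h1 : HasDerivAt (fun w : ℝ => (w + δ) ^ α) (1 * α * (z + δ) ^ (α - 1)) z :=
        ((hasDerivAt_id z).add_const δ).rpow_const (Or.inl (by positivity))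
      have h2 : HasDerivAt (fun w : ℝ => w ^ α) (1 * α * z ^ (α - 1)) z :=
        (hasDerivAt_id z).rpow_const (Or.inl hz0.ne')
      rw [HasDerivAt.deriv (f := fun w : ℝ => (w + δ) ^ α - w ^ α) (h1.sub h2)]
      have : (z + δ) ^ (α - 1) < z ^ (α - 1) :=
        Real.rpow_lt_rpow_of_neg hz0 (by linarith) (by linarith [hα.2])
      nlinarith [hα.1]
  exact (hanti hx (hx.trans hxy) hlt).le

include hα in
lemma bracket_anti {a b u v : ℝ} (huv : u < v) (hvb : v ≤ b) (hba : b ≤ a) :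
    (a - u) ^ α - (a - v) ^ α ≤ (b - u) ^ α - (b - v) ^ α := by
  have h := psi_anti hα (δ := v - u) (by linarith) (x := b - v) (y := a - v)
    (by linarith) (by linarith)
  have e1 : b - v + (v - u) = b - u := by ring
  have e2 : a - v + (v - u) = a - u := by ring
  rw [e1, e2] at h
  exact h

include hα in
lemma cmvt {a b p q : ℝ} (hpq : p < q) (hqb : q ≤ b) (hba : b < a) :
    ∃ c ∈ Set.Ioo p q,
      ((b - p) ^ α - (b - q) ^ α) * (α * (a - c) ^ (α - 1))
        = ((a - p) ^ α - (a - q) ^ α) * (α * (b - c) ^ (α - 1)) := by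
  set f : ℝ → ℝ := fun s => -((a - s) ^ α) with hf
  set g : ℝ → ℝ := fun s => -((b - s) ^ α) with hg
  have hcont : ∀ t : ℝ, ContinuousOn (fun s : ℝ => -((t - s) ^ α)) (Set.Icc p q) := by
    intro t
    apply ContinuousOn.neg
    intro s _
    exact ((Real.continuousAt_rpow_const (t - s) α (Or.inr hα.1.le)).comp
      ((continuous_const.sub continuous_id).continuousAt)).continuousWithinAt
  have hda : ∀ t : ℝ, ∀ s ∈ Set.Ioo p q, s < t →
      HasDerivAt (fun s : ℝ => -((t - s) ^ α)) (α * (t - s) ^ (α - 1)) s := by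
    intro t s _ hst
    have h1 : HasDerivAt (fun s : ℝ => t - s) (-1) s := (hasDerivAt_id s).const_sub t
    have h2 : HasDerivAt (fun s : ℝ => -((t - s) ^ α)) (-(-1 * α * (t - s) ^ (α - 1))) s :=
      (h1.rpow_const (p := α) (Or.inl (sub_ne_zero.mpr hst.ne'))).neg
    convert h2 using 1
    ring
  obtain ⟨c, hc, hcc⟩ := exists_ratio_deriv_eq_ratio_slope f hpq (hcont a)
    (fun s hs => ((hda a s hs (by linarith [hs.2])).differentiableAt).differentiableWithinAt)
    g (hcont b)
    (fun s hs => ((hda b s hs (by linarith [hs.2])).differentiableAt).differentiableWithinAt)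
  refine ⟨c, hc, ?_⟩
  rw [(hda a c hc (by linarith [hc.2])).deriv, (hda b c hc (by linarith [hc.2])).deriv] at hcc
  have e1 : g q - g p = (b - p) ^ α - (b - q) ^ α := by simp [hg]; ring
  have e2 : f q - f p = (a - p) ^ α - (a - q) ^ α := by simp [hf]; ring
  rw [e1, e2] at hcc
  exact hcc

include hα in
lemma bracket_ratio {a b x y u v : ℝ} (hxy : x < y) (hyu : y ≤ u) (huv : u < v)
    (hvb : v ≤ b) (hba : b < a) :
    ((a - u) ^ α - (a - v) ^ α) * ((b - x) ^ α - (b - y) ^ α)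
      ≤ ((a - x) ^ α - (a - y) ^ α) * ((b - u) ^ α - (b - v) ^ α) := by
  obtain ⟨c, hc, Ec⟩ := cmvt hα huv hvb hba
  obtain ⟨d, hd, Ed⟩ := cmvt hα hxy (by linarith) hba
  have hdc : d < c := by exact lt_of_lt_of_le hd.2 (le_trans hyu hc.1.le)
  have hbc : 0 < b - c := by linarith [hc.2]
  have hbd : 0 < b - d := by linarith [hd.2]
  have hac : 0 < a - c := by linarith
  have had : 0 < a - d := by linarith
  have E1 : ((b - u) ^ α - (b - v) ^ α) * (a - c) ^ (α - 1)
      = ((a - u) ^ α - (a - v) ^ α) * (b - c) ^ (α - 1) :=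
    mul_left_cancel₀ hα.1.ne' (by linear_combination Ec)
  have E2 : ((b - x) ^ α - (b - y) ^ α) * (a - d) ^ (α - 1)
      = ((a - x) ^ α - (a - y) ^ α) * (b - d) ^ (α - 1) :=
    mul_left_cancel₀ hα.1.ne' (by linear_combination Ed)
  have hΔbuv : 0 < (b - u) ^ α - (b - v) ^ α := bracket_pos hα huv hvb
  have hΔbxy : 0 < (b - x) ^ α - (b - y) ^ α := bracket_pos hα hxy (by linarith)
  have key : (a - c) ^ (α - 1) * (b - d) ^ (α - 1)
      ≤ (a - d) ^ (α - 1) * (b - c) ^ (α - 1) := by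
    rw [← Real.mul_rpow hac.le hbd.le, ← Real.mul_rpow had.le hbc.le]
    apply Real.rpow_le_rpow_of_nonpos (by positivity) (by nlinarith) (by linarith [hα.2])
  have hM : (0:ℝ) < (b - c) ^ (α - 1) * (b - d) ^ (α - 1) := by positivity
  rw [← mul_le_mul_iff_of_pos_right hM]
  have s1 : ((a - u) ^ α - (a - v) ^ α) * ((b - x) ^ α - (b - y) ^ α)
        * ((b - c) ^ (α - 1) * (b - d) ^ (α - 1))
      = ((b - u) ^ α - (b - v) ^ α) * ((b - x) ^ α - (b - y) ^ α)
        * ((a - c) ^ (α - 1) * (b - d) ^ (α - 1)) := by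
    linear_combination (-(((b - x) ^ α - (b - y) ^ α) * (b - d) ^ (α - 1))) * E1
  have s3 : ((b - u) ^ α - (b - v) ^ α) * ((b - x) ^ α - (b - y) ^ α)
        * ((a - d) ^ (α - 1) * (b - c) ^ (α - 1))
      = ((a - x) ^ α - (a - y) ^ α) * ((b - u) ^ α - (b - v) ^ α)
        * ((b - c) ^ (α - 1) * (b - d) ^ (α - 1)) := by
    linear_combination (((b - u) ^ α - (b - v) ^ α) * (b - c) ^ (α - 1)) * E2
  have s2 : ((b - u) ^ α - (b - v) ^ α) * ((b - x) ^ α - (b - y) ^ α)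
        * ((a - c) ^ (α - 1) * (b - d) ^ (α - 1))
      ≤ ((b - u) ^ α - (b - v) ^ α) * ((b - x) ^ α - (b - y) ^ α)
        * ((a - d) ^ (α - 1) * (b - c) ^ (α - 1)) :=
    mul_le_mul_of_nonneg_left key (by positivity)
  linarith

end Kernel

lemma sum_Icc_one (M : Type*) [AddCommMonoid M] (f : ℕ → M) (n : ℕ) :
    ∑ i ∈ Finset.Icc 1 n, f i = ∑ j ∈ Finset.range n, f (1 + j) := by
  rw [← Finset.Ico_add_one_right_eq_Icc, Finset.sum_Ico_eq_sum_range]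
  simp

lemma tele (M : Type*) [AddCommGroup M] (e : ℕ → M) (n : ℕ) :
    ∑ l ∈ Finset.Icc 1 n, (e l - e (l - 1)) = e n - e 0 := by
  rw [sum_Icc_one]
  rw [show ∑ j ∈ Finset.range n, (e (1 + j) - e (1 + j - 1))
      = ∑ j ∈ Finset.range n, (e (j + 1) - e j) from
    Finset.sum_congr rfl (fun j _ => by norm_num [Nat.add_comm 1 j])]
  exact Finset.sum_range_sub e n

lemma sumKB {M : Type*} [AddCommGroup M] [Module ℝ M] (k : ℕ → ℕ → ℝ) (N : ℕ)
    (hpos : ∀ i j, 1 ≤ j → j ≤ i → i ≤ N → 0 < k i j)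
    (e : ℕ → M) {n : ℕ} (hn : 1 ≤ n) (hnN : n ≤ N) :
    ∑ i ∈ Finset.Icc 1 n, k n i •
        (∑ l ∈ Finset.Icc 1 i, Bmat k i l • (e l - e (l - 1))) = e n - e 0 := by
  have step1 : ∀ i, k n i • (∑ l ∈ Finset.Icc 1 i, Bmat k i l • (e l - e (l - 1)))
      = ∑ l ∈ Finset.Icc 1 i, (k n i * Bmat k i l) • (e l - e (l - 1)) := by
    intro i
    rw [Finset.smul_sum]
    exact Finset.sum_congr rfl (fun l _ => smul_smul _ _ _)
  simp only [step1]
  rw [Finset.sum_comm' (s := Finset.Icc 1 n) (t := fun i => Finset.Icc 1 i)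
    (t' := Finset.Icc 1 n) (s' := fun l => Finset.Icc l n)
    (by intro i l; simp only [Finset.mem_Icc]; omega)]
  have step2 : ∀ l ∈ Finset.Icc 1 n,
      ∑ i ∈ Finset.Icc l n, (k n i * Bmat k i l) • (e l - e (l - 1))
        = e l - e (l - 1) := by
    intro l hl
    rw [Finset.mem_Icc] at hl
    rw [← Finset.sum_smul, Brel k hl.2 (hpos n n (hl.1.trans hl.2) le_rfl hnN).ne',
      one_smul]
  rw [Finset.sum_congr rfl step2]
  exact tele M e n

lemma abel_est (b ε : ℕ → ℝ) (i : ℕ) (hb0 : 0 ≤ b 0)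
    (hbm : ∀ j, j + 1 < i → b j ≤ b (j + 1)) (hε0 : ε 0 = 0)
    (hεi : ∀ l, l ≤ i → ε l ≤ ε i) :
    0 ≤ ∑ j ∈ Finset.range i, b j * (ε (j + 1) - ε j) := by
  rcases Nat.eq_zero_or_pos i with rfl | hi
  · simp
  obtain ⟨i', rfl⟩ : ∃ i', i = i' + 1 := ⟨i - 1, by omega⟩
  have hid : ∀ m : ℕ, ∑ j ∈ Finset.range (m + 1), b j * (ε (j + 1) - ε j)
      = b m * ε (m + 1) - ∑ j ∈ Finset.range m, (b (j + 1) - b j) * ε (j + 1) := by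
    intro m
    induction m with
    | zero => simp [hε0]
    | succ m ih =>
      rw [Finset.sum_range_succ, ih, Finset.sum_range_succ]
      ring
  rw [hid i']
  have hεnn : 0 ≤ ε (i' + 1) := by
    have := hεi 0 (by omega); linarith [this, hε0.symm.le]
  have hbd : ∑ j ∈ Finset.range i', (b (j + 1) - b j) * ε (j + 1)
      ≤ (b i' - b 0) * ε (i' + 1) := by
    calc ∑ j ∈ Finset.range i', (b (j + 1) - b j) * ε (j + 1)
        ≤ ∑ j ∈ Finset.range i', (b (j + 1) - b j) * ε (i' + 1) := by
          apply Finset.sum_le_sum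
          intro j hj
          rw [Finset.mem_range] at hj
          exact mul_le_mul_of_nonneg_left (hεi (j + 1) (by omega))
            (by linarith [hbm j (by omega)])
      _ = (b i' - b 0) * ε (i' + 1) := by
          rw [← Finset.sum_mul, Finset.sum_range_sub b i']
  have hbi' : b 0 ≤ b i' := by
    have haux : ∀ m, m ≤ i' → b 0 ≤ b m := by
      intro m
      induction m with
      | zero => intro _; exact le_rfl
      | succ m ih => intro h; exact le_trans (ih (by omega)) (hbm m (by omega))
    exact haux i' le_rfl
  nlinarith [mul_le_mul_of_nonneg_right hbi' hεnn]


open scoped RealInnerProductSpace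

/-- discrete `L²_α`-stability for the fractional minimizing movements
scheme: if `Φ ≥ m`, `U_n = U_0 + Σ_{i=1}^n K_{ni} V_i` (so `V` is the discrete Caputo
derivative of `U`) and `F_n - V_n ∈ ∂Φ(U_n)` for all `n`, then
`Σ_{i=1}^n K_{ni} ‖V_i‖² ≤ Σ_{i=1}^n K_{ni} ‖F_i‖² + 2(Φ(U_0) - m)`. -/
theorem stmt18 (α T : ℝ) (hα : α ∈ Set.Ioo (0 : ℝ) 1) (hT : 0 < T)
    (N : ℕ) (hN : 1 ≤ N) (tP : ℕ → ℝ) (htP0 : tP 0 = 0) (htPN : tP N = T)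
    (hmono : ∀ n < N, tP n < tP (n + 1))
    (Kf : ℕ → ℕ → ℝ)
    (hKf : ∀ n i, 1 ≤ i → i ≤ n → n ≤ N →
      Kf n i = (Real.Gamma (α + 1))⁻¹ * ((tP n - tP (i - 1)) ^ α - (tP n - tP i) ^ α))
    {𝓗 : Type*} [NormedAddCommGroup 𝓗] [InnerProductSpace ℝ 𝓗]
    (Φ : 𝓗 → ℝ) (m : ℝ) (hm : ∀ w : 𝓗, m ≤ Φ w)
    (U V F : ℕ → 𝓗)
    (hU : ∀ n, 1 ≤ n → n ≤ N → U n = U 0 + ∑ i ∈ Finset.Icc 1 n, Kf n i • V i)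
    (hsub : ∀ n, 1 ≤ n → n ≤ N → ∀ w : 𝓗, Φ (U n) + ⟪F n - V n, w - U n⟫ ≤ Φ w) :
    ∀ n, 1 ≤ n → n ≤ N →
      ∑ i ∈ Finset.Icc 1 n, Kf n i * ‖V i‖ ^ 2 ≤
        ∑ i ∈ Finset.Icc 1 n, Kf n i * ‖F i‖ ^ 2 + 2 * (Φ (U 0) - m) := by
  -- partition monotonicity facts
  have htlt : ∀ i j, i < j → j ≤ N → tP i < tP j := by
    intro i j hij hjN
    induction j with
    | zero => omega
    | succ j ih =>
      rcases Nat.lt_or_ge i j with h | h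
      · exact lt_trans (ih h (by omega)) (hmono j (by omega))
      · have hij' : i = j := by omega
        subst hij'; exact hmono i (by omega)
  have htle : ∀ i j, i ≤ j → j ≤ N → tP i ≤ tP j := by
    intro i j hij hjN
    rcases Nat.eq_or_lt_of_le hij with rfl | h
    · exact le_rfl
    · exact (htlt i j h hjN).le
  have hΓ : 0 < (Real.Gamma (α + 1))⁻¹ :=
    inv_pos.mpr (Real.Gamma_pos_of_pos (by linarith [hα.1]))
  -- kernel properties
  have kpos : ∀ i j, 1 ≤ j → j ≤ i → i ≤ N → 0 < Kf i j := by
    intro i j h1 h2 h3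
    rw [hKf i j h1 h2 h3]
    exact mul_pos hΓ (bracket_pos hα (htlt (j - 1) j (by omega) (by omega))
      (htle j i h2 h3))
  have kII : ∀ n j, 1 ≤ j → j ≤ n → n + 1 ≤ N → Kf (n + 1) j ≤ Kf n j := by
    intro n j h1 h2 h3
    rw [hKf (n + 1) j h1 (by omega) h3, hKf n j h1 h2 (by omega)]
    apply mul_le_mul_of_nonneg_left _ hΓ.le
    exact bracket_anti hα (htlt (j - 1) j (by omega) (by omega))
      (htle j n h2 (by omega)) (htlt n (n + 1) (by omega) h3).le
  have kIII : ∀ n j l, 1 ≤ l → l < j → j ≤ n → n + 1 ≤ N →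
      Kf (n + 1) j * Kf n l ≤ Kf (n + 1) l * Kf n j := by
    intro n j l h1 h2 h3 h4
    rw [hKf (n + 1) j (by omega) (by omega) h4, hKf n l h1 (by omega) (by omega),
      hKf (n + 1) l h1 (by omega) h4, hKf n j (by omega) h3 (by omega)]
    have hbr := bracket_ratio hα (a := tP (n + 1)) (b := tP n)
      (x := tP (l - 1)) (y := tP l) (u := tP (j - 1)) (v := tP j)
      (htlt (l - 1) l (by omega) (by omega)) (htle l (j - 1) (by omega) (by omega))
      (htlt (j - 1) j (by omega) (by omega)) (htle j n h3 (by omega))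
      (htlt n (n + 1) (by omega) h4)
    set γ := (Real.Gamma (α + 1))⁻¹ with hγ
    calc γ * ((tP (n + 1) - tP (j - 1)) ^ α - (tP (n + 1) - tP j) ^ α)
          * (γ * ((tP n - tP (l - 1)) ^ α - (tP n - tP l) ^ α))
        = (γ * γ) * (((tP (n + 1) - tP (j - 1)) ^ α - (tP (n + 1) - tP j) ^ α)
            * ((tP n - tP (l - 1)) ^ α - (tP n - tP l) ^ α)) := by ring
      _ ≤ (γ * γ) * (((tP (n + 1) - tP (l - 1)) ^ α - (tP (n + 1) - tP l) ^ α)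
            * ((tP n - tP (j - 1)) ^ α - (tP n - tP j) ^ α)) :=
          mul_le_mul_of_nonneg_left hbr (by positivity)
      _ = γ * ((tP (n + 1) - tP (l - 1)) ^ α - (tP (n + 1) - tP l) ^ α)
          * (γ * ((tP n - tP (j - 1)) ^ α - (tP n - tP j) ^ α)) := by ring
  intro n hn hnN
  -- representation of V through the deconvolution kernel
  have hU' : ∀ j, 1 ≤ j → j ≤ N →
      ∑ i ∈ Finset.Icc 1 j, Kf j i • V i = U j - U 0 := by
    intro j h1 h2; rw [hU j h1 h2]; abel
  have hrep : ∀ i, 1 ≤ i → i ≤ N →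
      V i = ∑ l ∈ Finset.Icc 1 i, Bmat Kf i l • (U l - U (l - 1)) := by
    intro i
    induction i using Nat.strong_induction_on with
    | _ i IH =>
      intro h1 h2
      have hKB := sumKB Kf N kpos U h1 h2
      have hsub2 : ∑ m ∈ Finset.Icc 1 i, Kf i m •
          (V m - ∑ l ∈ Finset.Icc 1 m, Bmat Kf m l • (U l - U (l - 1))) = 0 := by
        have hdistr : ∀ m ∈ Finset.Icc 1 i, Kf i m •
            (V m - ∑ l ∈ Finset.Icc 1 m, Bmat Kf m l • (U l - U (l - 1)))
            = Kf i m • V m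
              - Kf i m • ∑ l ∈ Finset.Icc 1 m, Bmat Kf m l • (U l - U (l - 1)) :=
          fun _ _ => smul_sub _ _ _
        rw [Finset.sum_congr rfl hdistr, Finset.sum_sub_distrib, hU' i h1 h2, hKB,
          sub_self]
      have hins : Finset.Icc 1 i = insert i (Finset.Icc 1 (i - 1)) := by
        ext x; simp only [Finset.mem_Icc, Finset.mem_insert]; omega
      rw [hins, Finset.sum_insert (by simp only [Finset.mem_Icc]; omega)] at hsub2
      have hz : ∑ m ∈ Finset.Icc 1 (i - 1), Kf i m •
          (V m - ∑ l ∈ Finset.Icc 1 m, Bmat Kf m l • (U l - U (l - 1))) = 0 := by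
        apply Finset.sum_eq_zero
        intro m hm
        rw [Finset.mem_Icc] at hm
        rw [IH m (by omega) hm.1 (by omega), sub_self, smul_zero]
      rw [hz, add_zero] at hsub2
      rcases smul_eq_zero.mp hsub2 with h | h
      · exact absurd h (kpos i i h1 le_rfl h2).ne'
      · exact sub_eq_zero.mp h
  -- the discrete Caputo derivative of Φ ∘ U
  set W : ℕ → ℝ :=
    fun i => ∑ l ∈ Finset.Icc 1 i, Bmat Kf i l * (Φ (U l) - Φ (U (l - 1))) with hWdef
  -- fractional chain rule
  have hchain : ∀ i, 1 ≤ i → i ≤ N → W i ≤ ⟪F i - V i, V i⟫ := by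
    intro i h1 h2
    set e : ℕ → ℝ :=
      fun j => ⟪F i - V i, U j - U 0⟫ - (Φ (U j) - Φ (U 0)) with he
    have he0 : e 0 = 0 := by simp [he]
    have hele : ∀ l, l ≤ i → e l ≤ e i := by
      intro l hl
      have hs := hsub i h1 h2 (U l)
      have hsplit : ⟪F i - V i, U l - U i⟫
          = ⟪F i - V i, U l - U 0⟫ - ⟪F i - V i, U i - U 0⟫ := by
        rw [← inner_sub_right]; congr 1; abel
      simp only [he]
      linarith [hs, hsplit]
    have hVi : ⟪F i - V i, V i⟫
        = ∑ l ∈ Finset.Icc 1 i, Bmat Kf i l * ⟪F i - V i, U l - U (l - 1)⟫ := by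
      rw [hrep i h1 h2, inner_sum]
      exact Finset.sum_congr rfl (fun l _ => real_inner_smul_right _ _ _)
    have hdiff : ⟪F i - V i, V i⟫ - W i
        = ∑ l ∈ Finset.Icc 1 i, Bmat Kf i l * (e l - e (l - 1)) := by
      rw [hVi]
      simp only [hWdef]
      rw [← Finset.sum_sub_distrib]
      apply Finset.sum_congr rfl
      intro l hl
      have hsplit : ⟪F i - V i, U l - U (l - 1)⟫
          = ⟪F i - V i, U l - U 0⟫ - ⟪F i - V i, U (l - 1) - U 0⟫ := by
        rw [← inner_sub_right]; congr 1; abel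
      simp only [he]
      rw [hsplit]; ring
    have habel : 0 ≤ ∑ l ∈ Finset.Icc 1 i, Bmat Kf i l * (e l - e (l - 1)) := by
      rw [sum_Icc_one]
      have hconv : ∑ j ∈ Finset.range i, Bmat Kf i (1 + j) * (e (1 + j) - e (1 + j - 1))
          = ∑ j ∈ Finset.range i, (fun j => Bmat Kf i (j + 1)) j * (e (j + 1) - e j) := by
        apply Finset.sum_congr rfl
        intro j _
        simp only [show (1 : ℕ) + j = j + 1 from by omega, Nat.add_sub_cancel]
      rw [hconv]
      apply abel_est (fun j => Bmat Kf i (j + 1)) e i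
      · exact Bnonneg Kf N kpos kII i 1 le_rfl h1 h2
      · intro j hj
        exact Bmono Kf N kpos kII kIII i (j + 1) (by omega) (by omega) h2
      · exact he0
      · exact hele
    linarith [hdiff, habel]
  -- sum identity for W
  have hWsum : ∑ i ∈ Finset.Icc 1 n, Kf n i * W i = Φ (U n) - Φ (U 0) := by
    have hs := sumKB (M := ℝ) Kf N kpos (fun j => Φ (U j)) hn hnN
    simp only [smul_eq_mul] at hs
    simp only [hWdef]
    exact hs
  -- final assembly
  have hpt : ∀ i ∈ Finset.Icc 1 n, Kf n i * ‖V i‖ ^ 2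
      ≤ Kf n i * ‖F i‖ ^ 2 - 2 * (Kf n i * W i) := by
    intro i hi
    rw [Finset.mem_Icc] at hi
    have hk := (kpos n i hi.1 hi.2 hnN).le
    have hc := hchain i hi.1 (hi.2.trans hnN)
    have hn2 : ‖V i‖ ^ 2 - ‖F i‖ ^ 2 + 2 * ⟪F i - V i, V i⟫ ≤ 0 := by
      have h1 := norm_sub_sq_real (V i) (F i)
      have h2 : ⟪F i - V i, V i⟫ = ⟪F i, V i⟫ - ⟪V i, V i⟫ := inner_sub_left _ _ _
      have h3 : ⟪V i, V i⟫ = ‖V i‖ ^ 2 := real_inner_self_eq_norm_sq _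
      have h4 : ⟪V i, F i⟫ = ⟪F i, V i⟫ := real_inner_comm _ _
      nlinarith [sq_nonneg ‖V i - F i‖]
    have h5 : ‖V i‖ ^ 2 ≤ ‖F i‖ ^ 2 - 2 * W i := by linarith
    calc Kf n i * ‖V i‖ ^ 2 ≤ Kf n i * (‖F i‖ ^ 2 - 2 * W i) :=
          mul_le_mul_of_nonneg_left h5 hk
      _ = Kf n i * ‖F i‖ ^ 2 - 2 * (Kf n i * W i) := by ring
  calc ∑ i ∈ Finset.Icc 1 n, Kf n i * ‖V i‖ ^ 2
      ≤ ∑ i ∈ Finset.Icc 1 n, (Kf n i * ‖F i‖ ^ 2 - 2 * (Kf n i * W i)) :=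
        Finset.sum_le_sum hpt
    _ = ∑ i ∈ Finset.Icc 1 n, Kf n i * ‖F i‖ ^ 2
        - 2 * ∑ i ∈ Finset.Icc 1 n, Kf n i * W i := by
        rw [Finset.sum_sub_distrib, ← Finset.mul_sum]
    _ = ∑ i ∈ Finset.Icc 1 n, Kf n i * ‖F i‖ ^ 2 - 2 * (Φ (U n) - Φ (U 0)) := by
        rw [hWsum]
    _ ≤ ∑ i ∈ Finset.Icc 1 n, Kf n i * ‖F i‖ ^ 2 + 2 * (Φ (U 0) - m) := by
        have := hm (U n); linarith
end

section
/- Let α ∈ (0,1) and T > 0. There exists a constant C > 0, depending only on α, with the following property: for every real Banach space 𝓗, every w_0 ∈ 𝓗, and every measurable v : (0,T) → 𝓗 with M² := sup_{t ∈ [0,T]} ∫_0^t (t−s)^{α−1} ‖v(s)‖² ds < ∞, the function w(t) = w_0 + (1/Γ(α)) ∫_0^t (t−s)^{α−1} v(s) ds satisfies, for all t_1, t_2 ∈ [0,T], ‖w(t_2) − w(t_1)‖ ≤ C |t_2 − t_1|^{α/2} M. In particular, w is (α/2)-Hölder continuous on [0,T]. -/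
universe u

open MeasureTheory Set
open scoped ENNReal NNReal


lemma kernel_integrableOn {r : ℝ} (hr : -1 < r) (a b c : ℝ) (hab : a ≤ b) :
    IntegrableOn (fun s => (c - s) ^ r) (Ioc a b) volume := by
  have h := (intervalIntegral.intervalIntegrable_rpow' (r := r) hr (a := c - a) (b := c - b)).comp_sub_left c
  simp only [sub_sub_cancel] at h
  exact (intervalIntegrable_iff_integrableOn_Ioc_of_le hab).mp h

open intervalIntegral in
lemma kernel_integral {α : ℝ} (hα : 0 < α) (a b c : ℝ) (hab : a ≤ b) :
    ∫ s in Ioc a b, (c - s) ^ (α - 1) = ((c - a) ^ α - (c - b) ^ α) / α := by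
  rw [← intervalIntegral.integral_of_le hab,
    intervalIntegral.integral_comp_sub_left (fun x => x ^ (α - 1)) c,
    integral_rpow (Or.inl (by linarith))]
  norm_num

lemma kernel_lintegral {α : ℝ} (hα : 0 < α) (a b c : ℝ) (hab : a ≤ b) (hbc : b ≤ c) :
    ∫⁻ s in Ioc a b, ENNReal.ofReal ((c - s) ^ (α - 1)) =
      ENNReal.ofReal (((c - a) ^ α - (c - b) ^ α) / α) := by
  rw [← ofReal_integral_eq_lintegral_ofReal (kernel_integrableOn (by linarith) a b c hab)
      ((ae_restrict_iff' measurableSet_Ioc).mpr (ae_of_all _ fun s hs =>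
        Real.rpow_nonneg (by linarith [hs.2]) _)),
    kernel_integral hα a b c hab]

lemma lintegral_CS (μ : Measure ℝ) (f g : ℝ → ℝ≥0∞) (hf : AEMeasurable f μ) (hg : AEMeasurable g μ) :
    ∫⁻ s, f s * g s ∂μ ≤ (∫⁻ s, f s ^ 2 ∂μ) ^ (1/2 : ℝ) * (∫⁻ s, g s ^ 2 ∂μ) ^ (1/2 : ℝ) := by
  have hpq : (2:ℝ).HolderConjugate 2 := ⟨by norm_num, by norm_num, by norm_num⟩
  have h := ENNReal.lintegral_mul_le_Lp_mul_Lq μ hpq hf hg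
  have h2 : ∀ x : ℝ≥0∞, x ^ (2:ℝ) = x ^ (2:ℕ) := fun x => by
    rw [← ENNReal.rpow_natCast]; norm_num
  simpa [h2] using h


lemma piece_bound {𝓗 : Type u} [NormedAddCommGroup 𝓗]
    {α : ℝ} (hα0 : 0 < α) (hα1 : α < 1)
    {a b : ℝ} (g : ℝ → ℝ) (hg : Measurable g)
    (hg_nonneg : ∀ s ∈ Ioo a b, 0 ≤ g s)
    (hg_le : ∀ s ∈ Ioo a b, g s ≤ (b - s) ^ (α - 1))
    (v : ℝ → 𝓗) (hv : AEMeasurable (fun s => (‖v s‖₊ : ℝ≥0∞)) (volume.restrict (Ioo a b))) :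
    ∫⁻ s in Ioo a b, ENNReal.ofReal (g s) * ‖v s‖₊ ≤
      (∫⁻ s in Ioo a b, ENNReal.ofReal (g s)) ^ (1/2 : ℝ) *
      (∫⁻ s in Ioo a b, ENNReal.ofReal ((b - s) ^ (α - 1)) * (‖v s‖₊ : ℝ≥0∞) ^ 2) ^ (1/2 : ℝ) := by
  set μ := volume.restrict (Ioo a b) with hμ
  set f₁ : ℝ → ℝ≥0∞ := fun s => ENNReal.ofReal (g s * (b - s) ^ ((1 - α)/2)) with hf₁def
  set f₂ : ℝ → ℝ≥0∞ := fun s => ENNReal.ofReal ((b - s) ^ ((α - 1)/2)) * ‖v s‖₊ with hf₂def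
  have hf₁ : Measurable f₁ := by fun_prop
  have hf₂ : AEMeasurable f₂ μ :=
    ((by fun_prop : Measurable fun s => ENNReal.ofReal ((b - s) ^ ((α - 1)/2))).aemeasurable).mul hv
  have hmem : ∀ᵐ s ∂μ, s ∈ Ioo a b :=
    (ae_restrict_iff' measurableSet_Ioo).mpr (ae_of_all _ fun s hs => hs)
  have lintegral_CS : ∫⁻ s, f₁ s * f₂ s ∂μ ≤
      (∫⁻ s, f₁ s ^ 2 ∂μ) ^ (1/2 : ℝ) * (∫⁻ s, f₂ s ^ 2 ∂μ) ^ (1/2 : ℝ) := by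
    have hpq : (2:ℝ).HolderConjugate 2 := ⟨by norm_num, by norm_num, by norm_num⟩
    have h := ENNReal.lintegral_mul_le_Lp_mul_Lq μ hpq hf₁.aemeasurable hf₂
    have h2 : ∀ x : ℝ≥0∞, x ^ (2:ℝ) = x ^ (2:ℕ) := fun x => by
      rw [← ENNReal.rpow_natCast]; norm_num
    simpa [h2] using h
  have h₁ : ∫⁻ s in Ioo a b, ENNReal.ofReal (g s) * ‖v s‖₊ = ∫⁻ s, f₁ s * f₂ s ∂μ := by
    refine lintegral_congr_ae ?_
    filter_upwards [hmem] with s hs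
    have hbs : 0 < b - s := by linarith [hs.2]
    simp only [hf₁def, hf₂def]
    rw [← mul_assoc, ← ENNReal.ofReal_mul (mul_nonneg (hg_nonneg s hs) (Real.rpow_nonneg hbs.le _)),
      mul_assoc (g s), ← Real.rpow_add hbs]
    have hz : (1 - α)/2 + (α - 1)/2 = 0 := by ring
    rw [hz, Real.rpow_zero, mul_one]
  have h₂ : ∫⁻ s, f₁ s ^ 2 ∂μ ≤ ∫⁻ s in Ioo a b, ENNReal.ofReal (g s) := by
    rw [← hμ]
    refine lintegral_mono_ae ?_
    filter_upwards [hmem] with s hs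
    have hbs : 0 < b - s := by linarith [hs.2]
    have hgs := hg_nonneg s hs
    have hw : 0 ≤ (b - s) ^ ((1 - α)/2) := Real.rpow_nonneg hbs.le _
    simp only [hf₁def, ← ENNReal.ofReal_pow (mul_nonneg hgs hw)]
    refine ENNReal.ofReal_le_ofReal ?_
    have w2 : ((b - s) ^ ((1 - α)/2)) ^ (2:ℕ) = (b - s) ^ (1 - α) := by
      rw [← Real.rpow_natCast ((b - s) ^ ((1 - α)/2)) 2, ← Real.rpow_mul hbs.le]
      norm_num
    have e2 : (b - s) ^ (α - 1) * (b - s) ^ (1 - α) = 1 := by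
      rw [← Real.rpow_add hbs]; norm_num
    calc (g s * (b - s) ^ ((1 - α)/2)) ^ (2:ℕ)
        = g s * g s * (b - s) ^ (1 - α) := by rw [mul_pow, w2]; ring
      _ ≤ g s * (b - s) ^ (α - 1) * (b - s) ^ (1 - α) := by
          apply mul_le_mul_of_nonneg_right _ (Real.rpow_nonneg hbs.le _)
          exact mul_le_mul_of_nonneg_left (hg_le s hs) hgs
      _ = g s := by rw [mul_assoc, e2, mul_one]
  have h₃ : ∫⁻ s, f₂ s ^ 2 ∂μ
      = ∫⁻ s in Ioo a b, ENNReal.ofReal ((b - s) ^ (α - 1)) * (‖v s‖₊ : ℝ≥0∞) ^ 2 := by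
    rw [← hμ]
    refine lintegral_congr_ae ?_
    filter_upwards [hmem] with s hs
    have hbs : 0 < b - s := by linarith [hs.2]
    simp only [hf₂def, mul_pow, ← ENNReal.ofReal_pow (Real.rpow_nonneg hbs.le _)]
    congr 2
    rw [← Real.rpow_natCast ((b - s) ^ ((α - 1)/2)) 2, ← Real.rpow_mul hbs.le]
    norm_num
  calc ∫⁻ s in Ioo a b, ENNReal.ofReal (g s) * ‖v s‖₊ = ∫⁻ s, f₁ s * f₂ s ∂μ := h₁
    _ ≤ (∫⁻ s, f₁ s ^ 2 ∂μ) ^ (1/2 : ℝ) * (∫⁻ s, f₂ s ^ 2 ∂μ) ^ (1/2 : ℝ) := lintegral_CS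
    _ ≤ _ := by
        rw [h₃]
        exact mul_le_mul' (ENNReal.rpow_le_rpow h₂ (by norm_num)) le_rfl

lemma piece_norm_bound {𝓗 : Type u} [NormedAddCommGroup 𝓗] [NormedSpace ℝ 𝓗]
    {α : ℝ} (hα0 : 0 < α) (hα1 : α < 1)
    {a b : ℝ} (g : ℝ → ℝ) (hg : Measurable g)
    (hg_nonneg : ∀ s ∈ Ioo a b, 0 ≤ g s)
    (hg_le : ∀ s ∈ Ioo a b, g s ≤ (b - s) ^ (α - 1))
    (v : ℝ → 𝓗) (hv : AEStronglyMeasurable v (volume.restrict (Ioo a b)))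
    {A B : ℝ} (hA : 0 ≤ A) (hB : 0 ≤ B)
    (hgint : ∫⁻ s in Ioo a b, ENNReal.ofReal (g s) ≤ ENNReal.ofReal A)
    (hvint : ∫⁻ s in Ioo a b, ENNReal.ofReal ((b - s) ^ (α - 1)) * (‖v s‖₊ : ℝ≥0∞) ^ 2
      ≤ ENNReal.ofReal B) :
    ‖∫ s in Ioc a b, g s • v s‖ ≤ Real.sqrt A * Real.sqrt B := by
  have hres : volume.restrict (Ioo a b) = volume.restrict (Ioc a b) :=
    Measure.restrict_congr_set Ioo_ae_eq_Ioc
  have hmem : ∀ᵐ s ∂(volume.restrict (Ioo a b)), s ∈ Ioo a b :=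
    (ae_restrict_iff' measurableSet_Ioo).mpr (ae_of_all _ fun s hs => hs)
  have step1 : ‖∫ s in Ioc a b, g s • v s‖ ≤
      (∫⁻ s in Ioo a b, ENNReal.ofReal (g s) * ‖v s‖₊).toReal := by
    refine (norm_integral_le_lintegral_norm _).trans (le_of_eq ?_)
    rw [← hres]
    congr 1
    refine lintegral_congr_ae ?_
    filter_upwards [hmem] with s hs
    rw [norm_smul, Real.norm_eq_abs, abs_of_nonneg (hg_nonneg s hs),
      ENNReal.ofReal_mul (hg_nonneg s hs), ofReal_norm, enorm_eq_nnnorm]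
  have hABnn : 0 ≤ Real.sqrt A * Real.sqrt B :=
    mul_nonneg (Real.sqrt_nonneg _) (Real.sqrt_nonneg _)
  refine step1.trans (ENNReal.toReal_le_of_le_ofReal hABnn ?_)
  have hcs := piece_bound hα0 hα1 g hg hg_nonneg hg_le v hv.enorm
  refine hcs.trans ?_
  have h12 : (0:ℝ) ≤ 1/2 := by norm_num
  refine (mul_le_mul' (ENNReal.rpow_le_rpow hgint h12)
    (ENNReal.rpow_le_rpow hvint h12)).trans (le_of_eq ?_)
  rw [Real.sqrt_eq_rpow, Real.sqrt_eq_rpow, ENNReal.ofReal_mul (Real.rpow_nonneg hA _),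
    ENNReal.ofReal_rpow_of_nonneg hA h12, ENNReal.ofReal_rpow_of_nonneg hB h12]

lemma same_lintegral {α : ℝ} (hα0 : 0 < α) {a b : ℝ} (hab : a ≤ b) :
    ∫⁻ s in Ioo a b, ENNReal.ofReal ((b - s) ^ (α - 1)) = ENNReal.ofReal ((b - a) ^ α / α) := by
  rw [Measure.restrict_congr_set Ioo_ae_eq_Ioc, kernel_lintegral hα0 a b b hab le_rfl,
    sub_self, Real.zero_rpow hα0.ne', sub_zero]

lemma diff_lintegral {α : ℝ} (hα0 : 0 < α) (hα1 : α < 1) {t₁ t₂ : ℝ} (h0 : 0 ≤ t₁) (h12 : t₁ ≤ t₂) :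
    ∫⁻ s in Ioo 0 t₁, ENNReal.ofReal ((t₁ - s) ^ (α - 1) - (t₂ - s) ^ (α - 1))
      ≤ ENNReal.ofReal ((t₂ - t₁) ^ α / α) := by
  have hint₁ := kernel_integrableOn (r := α - 1) (by linarith) 0 t₁ t₁ h0
  have hint₂ := kernel_integrableOn (r := α - 1) (by linarith) 0 t₁ t₂ h0
  have hInt : IntegrableOn (fun s => (t₁ - s) ^ (α - 1) - (t₂ - s) ^ (α - 1)) (Ioo 0 t₁) volume := by
    have h : IntegrableOn (fun s => (t₁ - s) ^ (α - 1) - (t₂ - s) ^ (α - 1)) (Ioc 0 t₁) volume :=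
      hint₁.sub hint₂
    exact h.mono_set Ioo_subset_Ioc_self
  have hnn : 0 ≤ᵐ[volume.restrict (Ioo 0 t₁)]
      fun s => (t₁ - s) ^ (α - 1) - (t₂ - s) ^ (α - 1) :=
    (ae_restrict_iff' measurableSet_Ioo).mpr (ae_of_all _ fun s hs => by
      have h1 : 0 < t₁ - s := by linarith [hs.2]
      have h2 : t₁ - s ≤ t₂ - s := by linarith
      have := Real.rpow_le_rpow_of_nonpos h1 h2 (by linarith : α - 1 ≤ 0)
      simpa using sub_nonneg.mpr this)
  rw [← ofReal_integral_eq_lintegral_ofReal hInt hnn]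
  refine ENNReal.ofReal_le_ofReal ?_
  have hmono : t₁ ^ α ≤ t₂ ^ α := Real.rpow_le_rpow h0 h12 hα0.le
  rw [← integral_Ioc_eq_integral_Ioo, integral_sub hint₁ hint₂, kernel_integral hα0 0 t₁ t₁ h0,
    kernel_integral hα0 0 t₁ t₂ h0]
  simp only [sub_zero, sub_self, Real.zero_rpow hα0.ne']
  rw [div_sub_div_same, div_le_div_iff_of_pos_right hα0]
  linarith

lemma kernel_smul_integrableOn {𝓗 : Type u} [NormedAddCommGroup 𝓗] [NormedSpace ℝ 𝓗]
    {α : ℝ} (hα0 : 0 < α) (hα1 : α < 1) {t M : ℝ} (ht : 0 ≤ t) {v : ℝ → 𝓗}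
    (hv : AEStronglyMeasurable v (volume.restrict (Ioc 0 t)))
    (hb : ∫⁻ s in Ioc 0 t, ENNReal.ofReal ((t - s) ^ (α - 1)) * (‖v s‖₊ : ℝ≥0∞) ^ 2
        ≤ ENNReal.ofReal (M ^ 2)) :
    IntegrableOn (fun s => ((t - s) ^ (α - 1)) • v s) (Ioc 0 t) volume := by
  have hres : volume.restrict (Ioo 0 t) = volume.restrict (Ioc 0 t) :=
    Measure.restrict_congr_set Ioo_ae_eq_Ioc
  have hv' : AEStronglyMeasurable v (volume.restrict (Ioo 0 t)) := hres ▸ hv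
  have hmem : ∀ᵐ s ∂(volume.restrict (Ioo 0 t)), s ∈ Ioo 0 t :=
    (ae_restrict_iff' measurableSet_Ioo).mpr (ae_of_all _ fun s hs => hs)
  constructor
  · exact ((by fun_prop : Measurable fun s => (t - s) ^ (α - 1)).aestronglyMeasurable).smul hv
  · rw [hasFiniteIntegral_iff_norm, ← hres]
    have heq : ∫⁻ s in Ioo 0 t, ENNReal.ofReal ‖((t - s) ^ (α - 1)) • v s‖
        = ∫⁻ s in Ioo 0 t, ENNReal.ofReal ((t - s) ^ (α - 1)) * ‖v s‖₊ := by
      refine lintegral_congr_ae ?_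
      filter_upwards [hmem] with s hs
      have hts : (0:ℝ) ≤ t - s := by linarith [hs.2]
      rw [norm_smul, Real.norm_eq_abs, abs_of_nonneg (Real.rpow_nonneg hts _),
        ENNReal.ofReal_mul (Real.rpow_nonneg hts _), ofReal_norm, enorm_eq_nnnorm]
    rw [heq]
    have hcs := piece_bound hα0 hα1 (fun s => (t - s) ^ (α - 1)) (by fun_prop)
      (fun s hs => Real.rpow_nonneg (by linarith [hs.2]) _) (fun s hs => le_rfl) v hv'.enorm
    refine lt_of_le_of_lt hcs ?_
    have h1 : ∫⁻ s in Ioo 0 t, ENNReal.ofReal ((t - s) ^ (α - 1))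
        = ENNReal.ofReal (t ^ α / α) := by simpa using same_lintegral hα0 ht
    have h2 : ∫⁻ s in Ioo 0 t, ENNReal.ofReal ((t - s) ^ (α - 1)) * (‖v s‖₊ : ℝ≥0∞) ^ 2
        ≤ ENNReal.ofReal (M ^ 2) := by rw [hres]; exact hb
    calc (∫⁻ s in Ioo 0 t, ENNReal.ofReal ((t - s) ^ (α - 1))) ^ (1/2 : ℝ) *
          (∫⁻ s in Ioo 0 t, ENNReal.ofReal ((t - s) ^ (α - 1)) * (‖v s‖₊ : ℝ≥0∞) ^ 2) ^ (1/2 : ℝ)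
        ≤ ENNReal.ofReal (t ^ α / α) ^ (1/2 : ℝ) * ENNReal.ofReal (M ^ 2) ^ (1/2 : ℝ) := by
          exact mul_le_mul' (by rw [h1]) (ENNReal.rpow_le_rpow h2 (by norm_num))
      _ < ⊤ := ENNReal.mul_lt_top
          (ENNReal.rpow_lt_top_of_nonneg (by norm_num) ENNReal.ofReal_ne_top)
          (ENNReal.rpow_lt_top_of_nonneg (by norm_num) ENNReal.ofReal_ne_top)

/-- Hölder continuity: there is `C > 0` depending only on `α` such that
for every `T > 0`, every Banach space `𝓗`, every `w₀` and every measurable `v` with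
`‖v‖_{L²_α(0,T;𝓗)} ≤ M`, the function
`w(t) = w₀ + Γ(α)⁻¹ ∫_0^t (t-s)^{α-1} v(s) ds` satisfies
`‖w(t₂) - w(t₁)‖ ≤ C |t₂ - t₁| ^ (α/2) M` for all `t₁, t₂ ∈ [0,T]`;
in particular `w` is `(α/2)`-Hölder continuous on `[0,T]`. -/
theorem stmt19 (α : ℝ) (hα : α ∈ Set.Ioo (0 : ℝ) 1) :
    ∃ C : ℝ, 0 < C ∧
      ∀ (T : ℝ), 0 < T →
      ∀ (𝓗 : Type u) [NormedAddCommGroup 𝓗] [NormedSpace ℝ 𝓗] [CompleteSpace 𝓗],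
      ∀ (w0 : 𝓗) (v : ℝ → 𝓗),
        AEStronglyMeasurable v (volume.restrict (Set.Ioc 0 T)) →
      ∀ (M : ℝ), 0 ≤ M →
        (∀ t ∈ Set.Icc (0 : ℝ) T,
          ∫⁻ s in Set.Ioc (0 : ℝ) t,
              ENNReal.ofReal ((t - s) ^ (α - 1)) * (‖v s‖₊ : ℝ≥0∞) ^ 2
            ≤ ENNReal.ofReal (M ^ 2)) →
      ∀ (w : ℝ → 𝓗),
        (∀ t ∈ Set.Icc (0 : ℝ) T,
          w t = w0 + (Real.Gamma α)⁻¹ • ∫ s in Set.Ioc (0 : ℝ) t, ((t - s) ^ (α - 1)) • v s) →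
      ∀ t₁ ∈ Set.Icc (0 : ℝ) T, ∀ t₂ ∈ Set.Icc (0 : ℝ) T,
        ‖w t₂ - w t₁‖ ≤ C * |t₂ - t₁| ^ (α / 2) * M := by
  obtain ⟨hα0, hα1⟩ := hα
  have hΓ : 0 < Real.Gamma α := Real.Gamma_pos_of_pos hα0
  have hsα : 0 < Real.sqrt α := Real.sqrt_pos.mpr hα0
  refine ⟨(Real.Gamma α)⁻¹ * 2 / Real.sqrt α, by positivity, ?_⟩
  intro T hT 𝓗 _ _ _ w0 v hv M hM hbound w hw
  have key : ∀ t₁ ∈ Icc (0:ℝ) T, ∀ t₂ ∈ Icc (0:ℝ) T, t₁ ≤ t₂ →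
      ‖w t₂ - w t₁‖ ≤ (Real.Gamma α)⁻¹ * 2 / Real.sqrt α * (t₂ - t₁) ^ (α/2) * M := by
    intro t₁ ht₁ t₂ ht₂ h12
    have h0t₁ : 0 ≤ t₁ := ht₁.1
    have h0t₂ : 0 ≤ t₂ := ht₂.1
    have hδ0 : 0 ≤ t₂ - t₁ := by linarith
    have hv₂ : AEStronglyMeasurable v (volume.restrict (Ioc 0 t₂)) :=
      hv.mono_measure (Measure.restrict_mono (Ioc_subset_Ioc_right ht₂.2 : Ioc (0:ℝ) t₂ ⊆ Ioc 0 T) (le_refl volume))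
    have hv₁ : AEStronglyMeasurable v (volume.restrict (Ioc 0 t₁)) :=
      hv.mono_measure (Measure.restrict_mono (Ioc_subset_Ioc_right ht₁.2 : Ioc (0:ℝ) t₁ ⊆ Ioc 0 T) (le_refl volume))
    have hres₁ : volume.restrict (Ioo (0:ℝ) t₁) = volume.restrict (Ioc 0 t₁) :=
      Measure.restrict_congr_set Ioo_ae_eq_Ioc
    have hvIoo₁ : AEStronglyMeasurable v (volume.restrict (Ioo 0 t₁)) := hres₁ ▸ hv₁
    have hvIoo₂ : AEStronglyMeasurable v (volume.restrict (Ioo t₁ t₂)) :=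
      hv₂.mono_measure (Measure.restrict_mono
        (Ioo_subset_Ioc_self.trans (Ioc_subset_Ioc_left h0t₁) : Ioo t₁ t₂ ⊆ Ioc 0 t₂) (le_refl volume))
    have int₂ := kernel_smul_integrableOn hα0 hα1 h0t₂ hv₂ (hbound t₂ ht₂)
    have int₁ := kernel_smul_integrableOn hα0 hα1 h0t₁ hv₁ (hbound t₁ ht₁)
    have int₂a : IntegrableOn (fun s => ((t₂ - s) ^ (α - 1)) • v s) (Ioc 0 t₁) volume :=
      int₂.mono_set (Ioc_subset_Ioc_right h12)
    have int₂b : IntegrableOn (fun s => ((t₂ - s) ^ (α - 1)) • v s) (Ioc t₁ t₂) volume :=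
      int₂.mono_set (Ioc_subset_Ioc_left h0t₁)
    have hsplit : ∫ s in Ioc (0:ℝ) t₂, ((t₂ - s) ^ (α - 1)) • v s
        = (∫ s in Ioc (0:ℝ) t₁, ((t₂ - s) ^ (α - 1)) • v s)
          + ∫ s in Ioc t₁ t₂, ((t₂ - s) ^ (α - 1)) • v s := by
      rw [← Ioc_union_Ioc_eq_Ioc h0t₁ h12]
      exact setIntegral_union (Ioc_disjoint_Ioc_of_le le_rfl) measurableSet_Ioc int₂a int₂b
    have hdiff : (∫ s in Ioc (0:ℝ) t₁, ((t₁ - s) ^ (α - 1)) • v s)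
        - (∫ s in Ioc (0:ℝ) t₁, ((t₂ - s) ^ (α - 1)) • v s)
        = ∫ s in Ioc (0:ℝ) t₁, ((t₁ - s) ^ (α - 1) - (t₂ - s) ^ (α - 1)) • v s := by
      rw [← integral_sub int₁ int₂a]
      congr 1
      ext s
      rw [sub_smul]
    have hwdiff : w t₂ - w t₁ = (Real.Gamma α)⁻¹ •
        ((∫ s in Ioc t₁ t₂, ((t₂ - s) ^ (α - 1)) • v s)
          - ∫ s in Ioc (0:ℝ) t₁, ((t₁ - s) ^ (α - 1) - (t₂ - s) ^ (α - 1)) • v s) := by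
      rw [hw t₂ ht₂, hw t₁ ht₁, hsplit, ← hdiff]
      simp only [smul_sub, smul_add]
      abel
    set A := (t₂ - t₁) ^ α / α with hAdef
    have hA : 0 ≤ A := div_nonneg (Real.rpow_nonneg hδ0 _) hα0.le
    have hB : (0:ℝ) ≤ M ^ 2 := sq_nonneg M
    have bound1 : ‖∫ s in Ioc t₁ t₂, ((t₂ - s) ^ (α - 1)) • v s‖
        ≤ Real.sqrt A * Real.sqrt (M ^ 2) :=
      piece_norm_bound hα0 hα1 _ (by fun_prop)
        (fun s hs => Real.rpow_nonneg (by linarith [hs.2]) _) (fun s hs => le_rfl)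
        v hvIoo₂ hA hB
        (le_of_eq (same_lintegral hα0 h12))
        ((lintegral_mono_set (Ioo_subset_Ioc_self.trans (Ioc_subset_Ioc_left h0t₁) : Ioo t₁ t₂ ⊆ Ioc 0 t₂)).trans
          (hbound t₂ ht₂))
    have bound2 : ‖∫ s in Ioc (0:ℝ) t₁, ((t₁ - s) ^ (α - 1) - (t₂ - s) ^ (α - 1)) • v s‖
        ≤ Real.sqrt A * Real.sqrt (M ^ 2) :=
      piece_norm_bound hα0 hα1 _ (by fun_prop)
        (fun s hs => by
          have h1 : 0 < t₁ - s := by linarith [hs.2]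
          have h2 : t₁ - s ≤ t₂ - s := by linarith
          have := Real.rpow_le_rpow_of_nonpos h1 h2 (by linarith : α - 1 ≤ 0)
          linarith)
        (fun s hs => by
          have h2 : (0:ℝ) ≤ (t₂ - s) ^ (α - 1) :=
            Real.rpow_nonneg (by linarith [hs.2]) _
          linarith)
        v hvIoo₁ hA hB
        (diff_lintegral hα0 hα1 h0t₁ h12)
        ((lintegral_mono_set Ioo_subset_Ioc_self).trans (hbound t₁ ht₁))
    have hsqrtM : Real.sqrt (M ^ 2) = M := by
      rw [Real.sqrt_sq hM]
    have hsqrtA : Real.sqrt A = (t₂ - t₁) ^ (α / 2) / Real.sqrt α := by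
      rw [hAdef, Real.sqrt_div (Real.rpow_nonneg hδ0 _)]
      congr 1
      rw [Real.sqrt_eq_rpow, ← Real.rpow_mul hδ0, mul_one_div]
    rw [hwdiff, norm_smul, Real.norm_eq_abs, abs_of_pos (inv_pos.mpr hΓ)]
    calc (Real.Gamma α)⁻¹ * ‖(∫ s in Ioc t₁ t₂, ((t₂ - s) ^ (α - 1)) • v s)
          - ∫ s in Ioc (0:ℝ) t₁, ((t₁ - s) ^ (α - 1) - (t₂ - s) ^ (α - 1)) • v s‖
        ≤ (Real.Gamma α)⁻¹ * (Real.sqrt A * Real.sqrt (M ^ 2) + Real.sqrt A * Real.sqrt (M ^ 2)) := by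
          refine mul_le_mul_of_nonneg_left ?_ (by positivity)
          exact (norm_sub_le _ _).trans (add_le_add bound1 bound2)
      _ = (Real.Gamma α)⁻¹ * 2 / Real.sqrt α * (t₂ - t₁) ^ (α / 2) * M := by
          rw [hsqrtM, hsqrtA]
          field_simp
          ring
  intro t₁ ht₁ t₂ ht₂
  rcases le_total t₁ t₂ with h | h
  · have := key t₁ ht₁ t₂ ht₂ h
    rwa [abs_of_nonneg (sub_nonneg.mpr h)]
  · have := key t₂ ht₂ t₁ ht₁ h
    rw [abs_sub_comm, abs_of_nonneg (sub_nonneg.mpr h), norm_sub_rev]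
    exact this
end
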